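/- Let ψ, ψ' : Θ → (S → ℝ≥0) be two signaling schemes (probability distributions over S for each state), p ∈ Δ(Θ) a prior, and suppose ‖ψ(·|θ) − ψ'(·|θ)‖_∞ ≤ ε/p(θ) for all θ with p(θ) > 0. Let u : A × Θ → [0,1] and let ξ : S^n → Δ(A) be any mechanism. Then |∑_θ p(θ) ∑_{𝐬∈S^n, a∈A} ξ(𝐬)(a) u(a,θ) ∏_i ψ(s_i|θ) − ∑_θ p(θ) ∑_{𝐬,a} ξ(𝐬)(a) u(a,θ) ∏_i ψ'(s_i|θ)| ≤ n·|S|·|Θ|·ε. -/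

import Mathlib

lemma sum_prod_one {S : Type*} [Fintype S] (n : ℕ) (g : S → ℝ) (hg1 : ∑ s : S, g s = 1) :
    ∑ σ : Fin n → S, ∏ i, g (σ i) = 1 := by
  induction n with
  | zero => simp
  | succ n ih =>
    rw [← Equiv.sum_comp (Fin.consEquiv (fun _ : Fin (n+1) => S))]
    simp only [Fin.consEquiv_apply, Fintype.sum_prod_type, Fin.prod_univ_succ,
      Fin.cons_zero, Fin.cons_succ]
    rw [← Finset.sum_mul_sum]
    · rw [hg1, ih, one_mul]

lemma sum_abs_prod_sub {S : Type*} [Fintype S] (n : ℕ) (f g : S → ℝ)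
    (hf0 : ∀ s, 0 ≤ f s) (hg0 : ∀ s, 0 ≤ g s)
    (hf1 : ∑ s : S, f s = 1) (hg1 : ∑ s : S, g s = 1) :
    ∑ σ : Fin n → S, |(∏ i, f (σ i)) - ∏ i, g (σ i)| ≤ n * ∑ s : S, |f s - g s| := by
  induction n with
  | zero => simp
  | succ n ih =>
    rw [← Equiv.sum_comp (Fin.consEquiv (fun _ : Fin (n+1) => S))]
    simp only [Fin.consEquiv_apply, Fintype.sum_prod_type, Fin.prod_univ_succ,
      Fin.cons_zero, Fin.cons_succ]
    have step : ∀ (s : S) (σ : Fin n → S),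
        |f s * ∏ i, f (σ i) - g s * ∏ i, g (σ i)|
          ≤ f s * |(∏ i, f (σ i)) - ∏ i, g (σ i)| + |f s - g s| * ∏ i, g (σ i) := by
      intro s σ
      have h1 : f s * ∏ i, f (σ i) - g s * ∏ i, g (σ i)
          = f s * ((∏ i, f (σ i)) - ∏ i, g (σ i)) + (f s - g s) * ∏ i, g (σ i) := by ring
      rw [h1]
      refine (abs_add_le _ _).trans ?_
      rw [abs_mul, abs_mul, abs_of_nonneg (hf0 s),
        abs_of_nonneg (Finset.prod_nonneg fun i _ => hg0 (σ i))]
    calc ∑ s : S, ∑ σ : Fin n → S, |f s * ∏ i, f (σ i) - g s * ∏ i, g (σ i)|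
        ≤ ∑ s : S, ∑ σ : Fin n → S,
            (f s * |(∏ i, f (σ i)) - ∏ i, g (σ i)| + |f s - g s| * ∏ i, g (σ i)) := by
          exact Finset.sum_le_sum fun s _ => Finset.sum_le_sum fun σ _ => step s σ
      _ = (∑ s : S, f s) * (∑ σ : Fin n → S, |(∏ i, f (σ i)) - ∏ i, g (σ i)|)
          + (∑ s : S, |f s - g s|) * (∑ σ : Fin n → S, ∏ i, g (σ i)) := by
          simp only [Finset.sum_add_distrib]
          rw [← Finset.sum_mul_sum, ← Finset.sum_mul_sum]
      _ ≤ 1 * (n * ∑ s : S, |f s - g s|) + (∑ s : S, |f s - g s|) * 1 := by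
          rw [hf1, sum_prod_one n g hg1]
          have h2 : (0:ℝ) ≤ ∑ s : S, |f s - g s| :=
            Finset.sum_nonneg fun s _ => abs_nonneg _
          nlinarith [ih]
      _ = (n + 1 : ℕ) * ∑ s : S, |f s - g s| := by push_cast; ring

theorem stmt_10 {Θ S A : Type*} [Fintype Θ] [Fintype S] [Fintype A] (n : ℕ)
    (p : Θ → ℝ) (hp0 : ∀ θ, 0 ≤ p θ) (hp1 : ∑ θ : Θ, p θ = 1)
    (ψ ψ' : Θ → S → ℝ)
    (hψ0 : ∀ θ s, 0 ≤ ψ θ s) (hψ1 : ∀ θ, ∑ s : S, ψ θ s = 1)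
    (hψ'0 : ∀ θ s, 0 ≤ ψ' θ s) (hψ'1 : ∀ θ, ∑ s : S, ψ' θ s = 1)
    (ε : ℝ)
    (hclose : ∀ θ, 0 < p θ → ∀ s, |ψ θ s - ψ' θ s| ≤ ε / p θ)
    (u : A → Θ → ℝ) (hu0 : ∀ a θ, 0 ≤ u a θ) (hu1 : ∀ a θ, u a θ ≤ 1)
    (ξ : (Fin n → S) → A → ℝ) (hξ0 : ∀ σ a, 0 ≤ ξ σ a) (hξ1 : ∀ σ, ∑ a : A, ξ σ a = 1) :
    |(∑ θ : Θ, p θ * ∑ σ : Fin n → S, ∑ a : A, ξ σ a * u a θ * ∏ i, ψ θ (σ i))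
      - ∑ θ : Θ, p θ * ∑ σ : Fin n → S, ∑ a : A, ξ σ a * u a θ * ∏ i, ψ' θ (σ i)|
      ≤ n * (Fintype.card S) * (Fintype.card Θ) * ε := by
  rcases isEmpty_or_nonempty Θ with hΘ | hΘ
  · rw [Finset.univ_eq_empty, Finset.sum_empty] at hp1; norm_num at hp1
  rcases isEmpty_or_nonempty S with hS | hS
  · have := hψ1 (Classical.arbitrary Θ)
    rw [Finset.univ_eq_empty, Finset.sum_empty] at this; norm_num at this
  -- ε is nonnegative
  have hex : ∃ θ : Θ, 0 < p θ := by
    by_contra h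
    push_neg at h
    have hz : ∑ θ : Θ, p θ = 0 :=
      Finset.sum_eq_zero fun θ _ => le_antisymm (h θ) (hp0 θ)
    rw [hz] at hp1; norm_num at hp1
  obtain ⟨θ0, hθ0⟩ := hex
  obtain ⟨s0⟩ := hS
  have hε : 0 ≤ ε := by
    have h2 : 0 ≤ ε / p θ0 := le_trans (abs_nonneg _) (hclose θ0 hθ0 s0)
    have h3 : ε = (ε / p θ0) * p θ0 := (div_mul_cancel₀ _ hθ0.ne').symm
    rw [h3]; exact mul_nonneg h2 hθ0.le
  -- per-state bound
  have key : ∀ θ : Θ,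
      |p θ * (∑ σ : Fin n → S, ∑ a : A, ξ σ a * u a θ * ∏ i, ψ θ (σ i))
        - p θ * (∑ σ : Fin n → S, ∑ a : A, ξ σ a * u a θ * ∏ i, ψ' θ (σ i))|
        ≤ n * (Fintype.card S) * ε := by
    intro θ
    rw [← mul_sub, abs_mul, abs_of_nonneg (hp0 θ)]
    rcases eq_or_lt_of_le (hp0 θ) with h0 | h0
    · rw [← h0, zero_mul]
      positivity
    · have e1 : (∑ σ : Fin n → S, ∑ a : A, ξ σ a * u a θ * ∏ i, ψ θ (σ i))
          - (∑ σ : Fin n → S, ∑ a : A, ξ σ a * u a θ * ∏ i, ψ' θ (σ i))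
          = ∑ σ : Fin n → S, ∑ a : A,
              ξ σ a * u a θ * ((∏ i, ψ θ (σ i)) - ∏ i, ψ' θ (σ i)) := by
        simp only [← Finset.sum_sub_distrib, ← mul_sub]
      have hb : |(∑ σ : Fin n → S, ∑ a : A, ξ σ a * u a θ * ∏ i, ψ θ (σ i))
          - ∑ σ : Fin n → S, ∑ a : A, ξ σ a * u a θ * ∏ i, ψ' θ (σ i)|
          ≤ n * ((Fintype.card S) * (ε / p θ)) := by
        rw [e1]
        calc |∑ σ : Fin n → S, ∑ a : A,
                ξ σ a * u a θ * ((∏ i, ψ θ (σ i)) - ∏ i, ψ' θ (σ i))|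
            ≤ ∑ σ : Fin n → S, ∑ a : A,
                |ξ σ a * u a θ * ((∏ i, ψ θ (σ i)) - ∏ i, ψ' θ (σ i))| := by
              refine (Finset.abs_sum_le_sum_abs _ _).trans ?_
              exact Finset.sum_le_sum fun σ _ => Finset.abs_sum_le_sum_abs _ _
          _ ≤ ∑ σ : Fin n → S, |(∏ i, ψ θ (σ i)) - ∏ i, ψ' θ (σ i)| := by
              refine Finset.sum_le_sum fun σ _ => ?_
              calc ∑ a : A, |ξ σ a * u a θ * ((∏ i, ψ θ (σ i)) - ∏ i, ψ' θ (σ i))|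
                  = ∑ a : A, ξ σ a * u a θ * |(∏ i, ψ θ (σ i)) - ∏ i, ψ' θ (σ i)| := by
                    refine Finset.sum_congr rfl fun a _ => ?_
                    rw [abs_mul, abs_of_nonneg (mul_nonneg (hξ0 σ a) (hu0 a θ))]
                _ = (∑ a : A, ξ σ a * u a θ) * |(∏ i, ψ θ (σ i)) - ∏ i, ψ' θ (σ i)| := by
                    rw [Finset.sum_mul]
                _ ≤ 1 * |(∏ i, ψ θ (σ i)) - ∏ i, ψ' θ (σ i)| := by
                    refine mul_le_mul_of_nonneg_right ?_ (abs_nonneg _)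
                    calc ∑ a : A, ξ σ a * u a θ ≤ ∑ a : A, ξ σ a :=
                          Finset.sum_le_sum fun a _ =>
                            mul_le_of_le_one_right (hξ0 σ a) (hu1 a θ)
                      _ = 1 := hξ1 σ
                _ = |(∏ i, ψ θ (σ i)) - ∏ i, ψ' θ (σ i)| := one_mul _
          _ ≤ n * ∑ s : S, |ψ θ s - ψ' θ s| :=
              sum_abs_prod_sub n (ψ θ) (ψ' θ) (hψ0 θ) (hψ'0 θ) (hψ1 θ) (hψ'1 θ)
          _ ≤ n * ((Fintype.card S) * (ε / p θ)) := by
              refine mul_le_mul_of_nonneg_left ?_ (Nat.cast_nonneg n)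
              calc ∑ s : S, |ψ θ s - ψ' θ s| ≤ ∑ _s : S, ε / p θ :=
                    Finset.sum_le_sum fun s _ => hclose θ h0 s
                _ = (Fintype.card S) * (ε / p θ) := by
                    rw [Finset.sum_const, Finset.card_univ, nsmul_eq_mul]
      calc p θ * |(∑ σ : Fin n → S, ∑ a : A, ξ σ a * u a θ * ∏ i, ψ θ (σ i))
            - ∑ σ : Fin n → S, ∑ a : A, ξ σ a * u a θ * ∏ i, ψ' θ (σ i)|
          ≤ p θ * (n * ((Fintype.card S) * (ε / p θ))) :=
            mul_le_mul_of_nonneg_left hb (hp0 θ)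
        _ = n * (Fintype.card S) * ε := by
            field_simp
  rw [← Finset.sum_sub_distrib]
  calc |∑ θ : Θ, (p θ * (∑ σ : Fin n → S, ∑ a : A, ξ σ a * u a θ * ∏ i, ψ θ (σ i))
          - p θ * (∑ σ : Fin n → S, ∑ a : A, ξ σ a * u a θ * ∏ i, ψ' θ (σ i)))|
      ≤ ∑ θ : Θ, |p θ * (∑ σ : Fin n → S, ∑ a : A, ξ σ a * u a θ * ∏ i, ψ θ (σ i))
          - p θ * (∑ σ : Fin n → S, ∑ a : A, ξ σ a * u a θ * ∏ i, ψ' θ (σ i))| :=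
        Finset.abs_sum_le_sum_abs _ _
    _ ≤ ∑ _θ : Θ, (n * (Fintype.card S) * ε) :=
        Finset.sum_le_sum fun θ _ => key θ
    _ = n * (Fintype.card S) * (Fintype.card Θ) * ε := by
        rw [Finset.sum_const, Finset.card_univ, nsmul_eq_mul]
        ring
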